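/- Let K be an algebraically closed field. The Zariski closure of the GL_3(K)-orbit of the pair D := (E_{31}, E_{32}) of 3×3 matrices contains E_ρ := (E_{21}, ρE_{21}) for every ρ ∈ K; in particular, since the pairs E_ρ for distinct ρ ∈ K lie in distinct GL_3(K)-orbits, the closure of the single orbit O(D) contains infinitely many GL_3(K)-orbits. -/

import Mathlib

open Matrix

/-- Evaluation of an element of the free algebra `K⟨x_1,…,x_m⟩` at a tuple of matrices. -/
noncomputable def evalTuple {K : Type*} [CommRing K] {n m : ℕ}
    (A : Fin m → Matrix (Fin n) (Fin n) K) :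
    FreeAlgebra K (Fin m) →ₐ[K] Matrix (Fin n) (Fin n) K :=
  FreeAlgebra.lift K A

/-- `φ(A)`: the `kn × ln` matrix obtained by substituting the tuple `A` into the
matrix `φ` over the free algebra. -/
noncomputable def phiEval {K : Type*} [CommRing K] {n m k l : ℕ}
    (A : Fin m → Matrix (Fin n) (Fin n) K)
    (φ : Matrix (Fin k) (Fin l) (FreeAlgebra K (Fin m))) :
    Matrix (Fin k × Fin n) (Fin l × Fin n) K :=
  fun p q => evalTuple A (φ p.1 q.1) p.2 q.2

/-- The hom-preorder `A ≤hom B`: `rk φ(A) ≥ rk φ(B)` for all matrices `φ`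
over the free algebra. -/
def homLE {K : Type*} [Field K] {n m : ℕ} (A B : Fin m → Matrix (Fin n) (Fin n) K) : Prop :=
  ∀ (k l : ℕ) (φ : Matrix (Fin k) (Fin l) (FreeAlgebra K (Fin m))),
    (phiEval B φ).rank ≤ (phiEval A φ).rank

/-- The orbit of a matrix tuple under simultaneous conjugation by `GL_n(K)`. -/
def simOrbit {K : Type*} [Field K] {n m : ℕ} (A : Fin m → Matrix (Fin n) (Fin n) K) :
    Set (Fin m → Matrix (Fin n) (Fin n) K) :=
  {B | ∃ g : GL (Fin n) K, ∀ i,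
    B i = (g : Matrix (Fin n) (Fin n) K) * A i * ((g⁻¹ : GL (Fin n) K) : Matrix (Fin n) (Fin n) K)}

/-- Membership in the Zariski closure of a subset of the affine space of matrix tuples:
every polynomial function vanishing on the set vanishes at the given point. -/
def inZariskiClosure {K : Type*} [Field K] {n m : ℕ}
    (S : Set (Fin m → Matrix (Fin n) (Fin n) K)) (B : Fin m → Matrix (Fin n) (Fin n) K) : Prop :=
  ∀ p : MvPolynomial (Fin m × Fin n × Fin n) K,
    (∀ C ∈ S, MvPolynomial.eval (fun q => C q.1 q.2.1 q.2.2) p = 0) →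
    MvPolynomial.eval (fun q => B q.1 q.2.1 q.2.2) p = 0

/-- The degeneration preorder: `A ≤deg B` iff `B` lies in the Zariski closure of the
`GL_n(K)`-orbit of `A`. -/
def degLE {K : Type*} [Field K] {n m : ℕ} (A B : Fin m → Matrix (Fin n) (Fin n) K) : Prop :=
  inZariskiClosure (simOrbit A) B

/-- A tuple of matrices is nilpotent if its components generate a nilpotent
(non-unital) subalgebra of the matrix algebra. -/
def IsNilpotentTuple {K : Type*} [Field K] {n m : ℕ}
    (A : Fin m → Matrix (Fin n) (Fin n) K) : Prop :=
  ∃ N : ℕ, ∀ f : Fin N → Matrix (Fin n) (Fin n) K,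
    (∀ i, f i ∈ NonUnitalAlgebra.adjoin K (Set.range A)) → (List.ofFn f).prod = 0

/-- The `3×3` matrix unit `E_{ij}` (with `0`-indexed positions: `E_{21} = Eu 1 0`, etc.). -/
def Eu {K : Type*} [Field K] (i j : Fin 3) : Matrix (Fin 3) (Fin 3) K :=
  Matrix.single i j 1

/-- A `3×3` matrix is strictly lower triangular. -/
def StrictLower {K : Type*} [Field K] (X : Matrix (Fin 3) (Fin 3) K) : Prop :=
  ∀ i j : Fin 3, i ≤ j → X i j = 0

section Aux

variable {K : Type*} [Field K]

lemma Eu20' : (Eu 2 0 : Matrix (Fin 3) (Fin 3) K) = !![0,0,0;0,0,0;1,0,0] := by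
  ext i j; fin_cases i <;> fin_cases j <;>
    simp [Eu, Matrix.single, Matrix.vecHead, Matrix.vecTail]

lemma Eu21' : (Eu 2 1 : Matrix (Fin 3) (Fin 3) K) = !![0,0,0;0,0,0;0,1,0] := by
  ext i j; fin_cases i <;> fin_cases j <;>
    simp [Eu, Matrix.single, Matrix.vecHead, Matrix.vecTail]

lemma Eu10' : (Eu 1 0 : Matrix (Fin 3) (Fin 3) K) = !![0,0,0;1,0,0;0,0,0] := by
  ext i j; fin_cases i <;> fin_cases j <;>
    simp [Eu, Matrix.single, Matrix.vecHead, Matrix.vecTail]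

lemma Eu12' : (Eu 1 2 : Matrix (Fin 3) (Fin 3) K) = !![0,0,0;0,0,1;0,0,0] := by
  ext i j; fin_cases i <;> fin_cases j <;>
    simp [Eu, Matrix.single, Matrix.vecHead, Matrix.vecTail]

lemma smul_expand' (ρ t : K) :
    ρ • (Eu 1 0 : Matrix (Fin 3) (Fin 3) K) + t • Eu 1 2 = !![0,0,0; ρ,0,t; 0,0,0] := by
  rw [Eu10', Eu12']
  ext i j; fin_cases i <;> fin_cases j <;> simp [Matrix.vecHead, Matrix.vecTail]

noncomputable def Mg (ρ t : K) : Matrix (Fin 3) (Fin 3) K := !![1,0,0; 0,0,1; -ρ/t, 1/t, 0]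
def Ng (ρ t : K) : Matrix (Fin 3) (Fin 3) K := !![1,0,0; ρ,0,t; 0,1,0]

lemma hMN (ρ t : K) (ht : t ≠ 0) : Mg ρ t * Ng ρ t = 1 := by
  rw [Mg, Ng, Matrix.mul_fin_three]
  ext i j; fin_cases i <;> fin_cases j <;>
    simp [Matrix.one_fin_three, Matrix.vecHead, Matrix.vecTail] <;> (try field_simp) <;> try ring

lemma hNM (ρ t : K) (ht : t ≠ 0) : Ng ρ t * Mg ρ t = 1 := by
  rw [Mg, Ng, Matrix.mul_fin_three]
  ext i j; fin_cases i <;> fin_cases j <;>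
    simp [Matrix.one_fin_three, Matrix.vecHead, Matrix.vecTail] <;> (try field_simp) <;> try ring

lemma conj1 (ρ t : K) : Mg ρ t * Eu 2 0 * Ng ρ t = Eu 1 0 := by
  rw [Mg, Ng, Eu20', Eu10', Matrix.mul_fin_three, Matrix.mul_fin_three]
  ext i j; fin_cases i <;> fin_cases j <;> simp [Matrix.vecHead, Matrix.vecTail]

lemma conj2 (ρ t : K) : Mg ρ t * Eu 2 1 * Ng ρ t = ρ • Eu 1 0 + t • Eu 1 2 := by
  rw [Mg, Ng, Eu21', smul_expand', Matrix.mul_fin_three, Matrix.mul_fin_three]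
  ext i j; fin_cases i <;> fin_cases j <;> simp [Matrix.vecHead, Matrix.vecTail]

lemma mem_orbit_aux (ρ t : K) (ht : t ≠ 0) :
    (![Eu 1 0, ρ • Eu 1 0 + t • Eu 1 2] : Fin 2 → Matrix (Fin 3) (Fin 3) K) ∈
      simOrbit (![Eu 2 0, Eu 2 1] : Fin 2 → Matrix (Fin 3) (Fin 3) K) := by
  refine ⟨⟨Mg ρ t, Ng ρ t, hMN ρ t ht, hNM ρ t ht⟩, ?_⟩
  intro i
  fin_cases i <;>
    simp only [Units.inv_mk, Units.val_mk, Matrix.cons_val_zero, Matrix.cons_val_one,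
      Matrix.head_cons]
  · exact (conj1 ρ t).symm
  · exact (conj2 ρ t).symm

lemma curve_eval {n m : ℕ}
    (B0 Bd : Fin m → Matrix (Fin n) (Fin n) K)
    (p : MvPolynomial (Fin m × Fin n × Fin n) K) (t : K) :
    Polynomial.eval t (MvPolynomial.aeval
        (fun q : Fin m × Fin n × Fin n =>
          Polynomial.C (B0 q.1 q.2.1 q.2.2) + Polynomial.C (Bd q.1 q.2.1 q.2.2) * Polynomial.X) p)
      = MvPolynomial.eval (fun q => B0 q.1 q.2.1 q.2.2 + Bd q.1 q.2.1 q.2.2 * t) p := by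
  rw [show (Polynomial.eval t : Polynomial K → K) = (Polynomial.aeval t : Polynomial K →ₐ[K] K)
    from rfl]
  rw [MvPolynomial.comp_aeval_apply]
  rw [← MvPolynomial.coe_aeval_eq_eval]
  simp

lemma degLE_aux [IsAlgClosed K] (ρ : K) :
    degLE (![Eu 2 0, Eu 2 1] : Fin 2 → Matrix (Fin 3) (Fin 3) K) ![Eu 1 0, ρ • Eu 1 0] := by
  intro p hp
  set B0 : Fin 2 → Matrix (Fin 3) (Fin 3) K := ![Eu 1 0, ρ • Eu 1 0] with hB0
  set Bd : Fin 2 → Matrix (Fin 3) (Fin 3) K := ![0, Eu 1 2] with hBd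
  set q : Polynomial K := MvPolynomial.aeval
      (fun q : Fin 2 × Fin 3 × Fin 3 =>
        Polynomial.C (B0 q.1 q.2.1 q.2.2) + Polynomial.C (Bd q.1 q.2.1 q.2.2) * Polynomial.X) p
    with hqdef
  have hcurve : ∀ t : K,
      (fun q : Fin 2 × Fin 3 × Fin 3 => B0 q.1 q.2.1 q.2.2 + Bd q.1 q.2.1 q.2.2 * t)
        = fun q : Fin 2 × Fin 3 × Fin 3 =>
            (![Eu 1 0, ρ • Eu 1 0 + t • Eu 1 2] : Fin 2 → Matrix (Fin 3) (Fin 3) K)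
              q.1 q.2.1 q.2.2 := by
    intro t
    funext x
    obtain ⟨i, a, b⟩ := x
    fin_cases i <;>
      simp [hB0, hBd, Matrix.add_apply, Matrix.smul_apply, mul_comm]
  have hroot : ∀ t : K, t ≠ 0 → Polynomial.eval t q = 0 := by
    intro t ht
    rw [hqdef, curve_eval, hcurve t]
    exact hp _ (mem_orbit_aux ρ t ht)
  have hq0 : q = 0 := by
    apply Polynomial.eq_zero_of_infinite_isRoot
    apply Set.Infinite.mono (s := ({0}ᶜ : Set K))
    · exact fun t ht => hroot t ht
    · exact (Set.finite_singleton (0 : K)).infinite_compl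
  have := curve_eval B0 Bd p 0
  rw [← hqdef, hq0] at this
  simp only [Polynomial.eval_zero] at this
  rw [show (fun q : Fin 2 × Fin 3 × Fin 3 =>
      (![Eu 1 0, ρ • Eu 1 0] : Fin 2 → Matrix (Fin 3) (Fin 3) K) q.1 q.2.1 q.2.2)
    = fun q : Fin 2 × Fin 3 × Fin 3 => B0 q.1 q.2.1 q.2.2 + Bd q.1 q.2.1 q.2.2 * 0 by
      funext x; simp [hB0]]
  exact this.symm

lemma orbit_ne_aux (ρ σ : K) (h : ρ ≠ σ) :
    simOrbit (![Eu 1 0, ρ • Eu 1 0] : Fin 2 → Matrix (Fin 3) (Fin 3) K) ≠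
      simOrbit (![Eu 1 0, σ • Eu 1 0] : Fin 2 → Matrix (Fin 3) (Fin 3) K) := by
  intro heq
  have hmem : (![Eu 1 0, σ • Eu 1 0] : Fin 2 → Matrix (Fin 3) (Fin 3) K) ∈
      simOrbit (![Eu 1 0, ρ • Eu 1 0] : Fin 2 → Matrix (Fin 3) (Fin 3) K) := by
    rw [heq]
    exact ⟨1, by intro i; simp⟩
  obtain ⟨g, hg⟩ := hmem
  have h0 := hg 0
  have h1 := hg 1
  simp only [Matrix.cons_val_zero, Matrix.cons_val_one, Matrix.head_cons] at h0 h1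
  rw [Matrix.mul_smul, Matrix.smul_mul, ← h0] at h1
  have := congrFun (congrFun h1 1) 0
  simp only [Matrix.smul_apply, Eu10', smul_eq_mul] at this
  norm_num [Matrix.vecHead, Matrix.vecTail] at this
  exact h this.symm

end Aux

/-- The Zariski closure of the orbit of `D = (E_{31}, E_{32})` contains
`E_ρ = (E_{21}, ρE_{21})` for every `ρ ∈ K`; the pairs `E_ρ` for distinct `ρ` lie in
distinct `GL_3(K)`-orbits, and hence the closure of the single orbit `O(D)` contains
infinitely many orbits. -/
theorem orbit_closure_of_D_contains_infinitely_many_orbits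
    {K : Type*} [Field K] [IsAlgClosed K] :
    (∀ ρ : K, degLE (![Eu 2 0, Eu 2 1] : Fin 2 → Matrix (Fin 3) (Fin 3) K)
      ![Eu 1 0, ρ • Eu 1 0]) ∧
    (∀ ρ σ : K, ρ ≠ σ →
      simOrbit (![Eu 1 0, ρ • Eu 1 0] : Fin 2 → Matrix (Fin 3) (Fin 3) K) ≠
        simOrbit (![Eu 1 0, σ • Eu 1 0] : Fin 2 → Matrix (Fin 3) (Fin 3) K)) ∧
    {S : Set (Fin 2 → Matrix (Fin 3) (Fin 3) K) |
      ∃ ρ : K, S = simOrbit (![Eu 1 0, ρ • Eu 1 0] : Fin 2 → Matrix (Fin 3) (Fin 3) K)}.Infinite := by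
  refine ⟨degLE_aux, orbit_ne_aux, ?_⟩
  have hset : {S : Set (Fin 2 → Matrix (Fin 3) (Fin 3) K) |
      ∃ ρ : K, S = simOrbit (![Eu 1 0, ρ • Eu 1 0] : Fin 2 → Matrix (Fin 3) (Fin 3) K)}
      = Set.range (fun ρ : K =>
          simOrbit (![Eu 1 0, ρ • Eu 1 0] : Fin 2 → Matrix (Fin 3) (Fin 3) K)) := by
    ext S; simp [Set.range, eq_comm]
  rw [hset]
  apply Set.infinite_range_of_injective
  intro ρ σ h
  by_contra hne
  exact orbit_ne_aux ρ σ hne h
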